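/- Let n ≥ 1 and let S be a subset of the symmetric group S_n that is inverse-closed, does not contain the identity, and is closed under conjugation (g⁻¹sg ∈ S for all s ∈ S, g ∈ S_n). Then every real eigenvalue of the adjacency matrix of the Cayley graph Γ(S_n, S) is an integer. -/

import Mathlib

open Polynomial Matrix

section Helpers

variable {F : Type*} [Field F] {N : Type*} [Fintype N] [DecidableEq N]




theorem myEvalCharpoly (M : Matrix N N F) (x : F) :
    M.charpoly.eval x = (x • (1 : Matrix N N F) - M).det := by
  rw [Matrix.charpoly, ← Polynomial.coe_evalRingHom, RingHom.map_det]
  congr 1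
  ext i j
  by_cases h : i = j <;>
    simp [h, Matrix.charmatrix_apply, Matrix.map_apply, Matrix.one_apply, Matrix.smul_apply,
      Matrix.diagonal_apply]

theorem myExistsEig (M : Matrix N N F) {x : F} (hx : M.charpoly.IsRoot x) :
    ∃ v, v ≠ 0 ∧ M *ᵥ v = x • v := by
  have hdet : (x • (1 : Matrix N N F) - M).det = 0 := by
    rw [← myEvalCharpoly]; exact hx
  obtain ⟨v, hv, hv0⟩ := (Matrix.exists_mulVec_eq_zero_iff).mpr hdet
  refine ⟨v, hv, ?_⟩
  rw [Matrix.sub_mulVec, Matrix.smul_mulVec, Matrix.one_mulVec, sub_eq_zero] at hv0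
  exact hv0.symm

theorem myDetZero (M : Matrix N N F) {x : F} (hx : M.charpoly.IsRoot x) :
    (M - x • (1 : Matrix N N F)).det = 0 := by
  obtain ⟨v, hv, hv0⟩ := myExistsEig M hx
  rw [← Matrix.exists_mulVec_eq_zero_iff]
  exact ⟨v, hv, by rw [Matrix.sub_mulVec, Matrix.smul_mulVec, Matrix.one_mulVec, hv0,
    sub_self]⟩

theorem myPowMulVec (M : Matrix N N F) {v : N → F} {x : F} (hv : M *ᵥ v = x • v) (j : ℕ) :
    (M ^ j) *ᵥ v = x ^ j • v := by
  induction j with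
  | zero => simp
  | succ j ih =>
      rw [pow_succ', pow_succ', ← Matrix.mulVec_mulVec, ih, Matrix.mulVec_smul, hv, smul_smul, mul_comm x]

theorem myAevalMulVec (M : Matrix N N F) (p : F[X]) {v : N → F} {x : F}
    (hv : M *ᵥ v = x • v) : (Polynomial.aeval M p) *ᵥ v = p.eval x • v := by
  induction p using Polynomial.induction_on' with
  | add p q hp hq => rw [map_add, Matrix.add_mulVec, hp, hq, eval_add, add_smul]
  | monomial n a =>
      rw [Polynomial.aeval_monomial, eval_monomial]
      rw [Algebra.algebraMap_eq_smul_one, smul_mul_assoc, one_mul, Matrix.smul_mulVec,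
        myPowMulVec M hv n, smul_smul]

theorem myRootAnn (M : Matrix N N F) {p : F[X]} (hp : Polynomial.aeval M p = 0) {x : F}
    (hx : M.charpoly.IsRoot x) : p.eval x = 0 := by
  obtain ⟨v, hv, hv0⟩ := myExistsEig M hx
  have h2 := myAevalMulVec M p hv0
  rw [hp, Matrix.zero_mulVec] at h2
  rcases smul_eq_zero.mp h2.symm with h | h
  · exact h
  · exact absurd h hv


theorem mySumNat {s : Multiset F} (h : ∀ a ∈ s, a = 0 ∨ a = 1) :
    ∃ r : ℕ, s.sum = (r : F) ∧ ((1 : F) ∈ s → 0 < r) := by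
  induction s using Multiset.induction_on with
  | empty => exact ⟨0, by simp, by simp⟩
  | cons a s ih =>
      obtain ⟨r, hr, hr1⟩ := ih fun b hb => h b (Multiset.mem_cons_of_mem hb)
      rcases h a (Multiset.mem_cons_self a s) with ha | ha
      · subst ha
        refine ⟨r, by simp [hr], fun h1 => ?_⟩
        rcases Multiset.mem_cons.mp h1 with h1 | h1
        · exact absurd h1 one_ne_zero
        · exact hr1 h1
      · subst ha
        exact ⟨r + 1, by rw [Multiset.sum_cons, hr]; push_cast; ring, fun _ => Nat.succ_pos r⟩

theorem myIdemTrace [IsAlgClosed F] {P : Matrix N N F} (hP : P * P = P) :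
    ∃ r : ℕ, P.trace = (r : F) ∧ (P ≠ 0 → 0 < r) := by
  have hann : Polynomial.aeval P (X ^ 2 - X : F[X]) = 0 := by
    simp [sq, hP]
  have hroots : ∀ a ∈ P.charpoly.roots, a = 0 ∨ a = 1 := by
    intro a ha
    have h0 := myRootAnn P hann (isRoot_of_mem_roots ha)
    have : a * (a - 1) = 0 := by
      rw [eval_sub, eval_pow, eval_X] at h0; ring_nf; ring_nf at h0; linear_combination h0
    rcases mul_eq_zero.mp this with h | h
    · exact Or.inl h
    · exact Or.inr (sub_eq_zero.mp h)
  obtain ⟨r, hr, hr1⟩ := mySumNat hroots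
  rw [Matrix.trace_eq_sum_roots_charpoly] at *
  refine ⟨r, hr, fun hP0 => hr1 ?_⟩
  -- 1 is a root of charpoly
  have hw : ∃ w, P *ᵥ w ≠ 0 := by
    by_contra hc
    push_neg at hc
    apply hP0
    ext i j
    have := congrFun (hc (Pi.single j 1)) i
    simpa [Matrix.mulVec, dotProduct, Pi.single_apply] using this
  obtain ⟨w, hw⟩ := hw
  have hroot1 : P.charpoly.IsRoot 1 := by
    rw [Polynomial.IsRoot, myEvalCharpoly]
    rw [← Matrix.exists_mulVec_eq_zero_iff]
    refine ⟨P *ᵥ w, hw, ?_⟩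
    rw [Matrix.sub_mulVec, Matrix.smul_mulVec, Matrix.one_mulVec, Matrix.mulVec_mulVec, hP,
      one_smul, sub_self]
  exact (mem_roots P.charpoly_monic.ne_zero).mpr hroot1

theorem myNilTrace [IsAlgClosed F] {M : Matrix N N F} {j : ℕ} (hj : 0 < j) (hM : M ^ j = 0) :
    M.trace = 0 := by
  have hann : Polynomial.aeval M (X ^ j : F[X]) = 0 := by simp [hM]
  rw [Matrix.trace_eq_sum_roots_charpoly]
  refine Multiset.sum_eq_zero fun a ha => ?_
  have h0 := myRootAnn M hann (isRoot_of_mem_roots ha)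
  rw [eval_pow, eval_X] at h0
  exact pow_eq_zero_iff hj.ne' |>.mp h0
theorem myStar [IsAlgClosed F] [CharZero F] {m k : ℕ} (hm : 0 < m) (hk : 0 < k)
    (σ : F →+* F) (hσ : ∀ ξ : F, ξ ^ m = 1 → σ ξ = ξ ^ k)
    {Q : Matrix N N F} (hQ : Q ^ (m + 1) = Q) :
    σ Q.trace = (Q ^ k).trace := by
  classical
  haveI : NeZero (m : F) := ⟨Nat.cast_ne_zero.mpr hm.ne'⟩
  obtain ⟨ζ, hζ⟩ := HasEnoughRootsOfUnity.exists_primitiveRoot F m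
  set t : Finset F := insert (0 : F) (Polynomial.nthRootsFinset m (1 : F)) with ht
  have h0t : (0 : F) ∈ t := Finset.mem_insert_self _ _
  have htne : t.Nonempty := ⟨0, h0t⟩
  have h0nth : (0 : F) ∉ Polynomial.nthRootsFinset m (1 : F) := by
    intro h
    have := (Polynomial.mem_nthRootsFinset hm 1).mp h
    simp [zero_pow hm.ne'] at this
  have hprod : ∏ c ∈ t, (X - C c) = X ^ (m + 1) - X := by
    rw [ht, Finset.prod_insert h0nth, ← Polynomial.X_pow_sub_one_eq_prod hm hζ, map_zero, sub_zero]
    ring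
  have hann : Polynomial.aeval Q (∏ c ∈ t, (X - C c)) = 0 := by
    rw [hprod]
    simp [hQ]
  have hinj : Set.InjOn (id : F → F) t := fun a _ b _ h => h
  -- basis representation
  have hbasis : ∀ c : F, Lagrange.basis t id c
      = C (∏ j ∈ t.erase c, (c - j)⁻¹) * ∏ j ∈ t.erase c, (X - C j) := by
    intro c
    rw [Lagrange.basis, map_prod, ← Finset.prod_mul_distrib]
    rfl
  set E : F → Matrix N N F := fun c => Polynomial.aeval Q (Lagrange.basis t id c) with hE
  have hsum : ∑ c ∈ t, E c = 1 := by
    rw [hE, ← map_sum, Lagrange.sum_basis hinj htne, _root_.map_one]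
  have hQE : ∀ c ∈ t, Q * E c = c • E c := by
    intro c hc
    have hdvd : (X - C c) * Lagrange.basis t id c
        = C (∏ j ∈ t.erase c, (c - j)⁻¹) * ∏ j ∈ t, (X - C j) := by
      rw [hbasis, ← Finset.mul_prod_erase t _ hc]
      ring
    have h0 : Polynomial.aeval Q ((X - C c) * Lagrange.basis t id c) = 0 := by
      rw [hdvd, _root_.map_mul, hann, mul_zero]
    rw [_root_.map_mul, map_sub, Polynomial.aeval_X, Polynomial.aeval_C,
      Algebra.algebraMap_eq_smul_one, sub_mul, smul_mul_assoc, one_mul, sub_eq_zero] at h0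
    exact h0
  have hQjE : ∀ (j : ℕ), ∀ c ∈ t, Q ^ j * E c = c ^ j • E c := by
    intro j
    induction j with
    | zero => intro c hc; simp
    | succ j ih =>
        intro c hc
        rw [pow_succ', mul_assoc, ih c hc, mul_smul_comm, hQE c hc, smul_smul, pow_succ',
          mul_comm c]
  have hEE : ∀ c ∈ t, ∀ c' ∈ t, c ≠ c' → E c * E c' = 0 := by
    intro c hc c' hc' hne
    have hdvd : (∏ j ∈ t, (X - C j)) ∣ Lagrange.basis t id c * Lagrange.basis t id c' := by
      rw [hbasis c, hbasis c']
      have h1 : (X - C c) ∣ ∏ j ∈ t.erase c', (X - C j) :=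
        Finset.dvd_prod_of_mem _ (Finset.mem_erase.mpr ⟨hne, hc⟩)
      obtain ⟨w, hw⟩ := h1
      rw [hw]
      refine Dvd.intro_left (C (∏ j ∈ t.erase c, (c - j)⁻¹) * C (∏ j ∈ t.erase c', (c' - j)⁻¹)
        * w) ?_
      rw [← Finset.mul_prod_erase t _ hc]
      ring
    obtain ⟨w, hw⟩ := hdvd
    show Polynomial.aeval Q (Lagrange.basis t id c) * Polynomial.aeval Q (Lagrange.basis t id c')
      = 0
    rw [← _root_.map_mul, hw, _root_.map_mul, hann, zero_mul]
  have hidem : ∀ c ∈ t, E c * E c = E c := by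
    intro c hc
    have h1 : E c * (∑ c' ∈ t, E c') = E c := by rw [hsum, mul_one]
    rw [Finset.mul_sum] at h1
    calc E c * E c = ∑ c' ∈ t, E c * E c' :=
          (Finset.sum_eq_single c (fun c' hc' hne => hEE c hc c' hc' (Ne.symm hne))
            (fun h => absurd hc h)).symm
      _ = E c := h1
  have htr : ∀ (j : ℕ), (Q ^ j).trace = ∑ c ∈ t, c ^ j * (E c).trace := by
    intro j
    have h1 : Q ^ j = ∑ c ∈ t, c ^ j • E c := by
      calc Q ^ j = Q ^ j * (∑ c ∈ t, E c) := by rw [hsum, mul_one]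
      _ = ∑ c ∈ t, c ^ j • E c := by
            rw [Finset.mul_sum]
            exact Finset.sum_congr rfl fun c hc => hQjE j c hc
    rw [h1, Matrix.trace_sum]
    exact Finset.sum_congr rfl fun c hc => by rw [Matrix.trace_smul, smul_eq_mul]
  have hnat : ∀ c ∈ t, ∃ r : ℕ, (E c).trace = (r : F) := by
    intro c hc
    obtain ⟨r, hr, _⟩ := myIdemTrace (hidem c hc)
    exact ⟨r, hr⟩
  have hσc : ∀ c ∈ t, σ c = c ^ k := by
    intro c hc
    rcases Finset.mem_insert.mp hc with h | h
    · subst h; rw [map_zero, zero_pow hk.ne']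
    · exact hσ c ((Polynomial.mem_nthRootsFinset hm 1).mp h)
  have htr1 : Q.trace = ∑ c ∈ t, c * (E c).trace := by
    have := htr 1
    simpa using this
  rw [htr1, map_sum, htr k]
  refine Finset.sum_congr rfl fun c hc => ?_
  obtain ⟨r, hr⟩ := hnat c hc
  rw [_root_.map_mul, hr, map_natCast, hσc c hc, ← hr]
theorem myCommuteAeval {A M : Matrix N N F} (h : Commute M A) (p : F[X]) :
    Commute M (Polynomial.aeval A p) := by
  induction p using Polynomial.induction_on' with
  | add p q hp hq => rw [map_add]; exact hp.add_right hq
  | monomial n a =>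
      rw [Polynomial.aeval_monomial]
      exact Commute.mul_right (show Commute M _ from (Algebra.commutes a M).symm) (h.pow_right n)

theorem myIdemPow {P : Matrix N N F} (hP : P * P = P) {j : ℕ} (hj : 0 < j) : P ^ j = P := by
  induction j with
  | zero => exact absurd hj (lt_irrefl 0)
  | succ j ih =>
      rcases Nat.eq_zero_or_pos j with h | h
      · subst h; rw [pow_one]
      · rw [pow_succ, ih h, hP]

section Group

variable {G : Type*} [Group G] [Fintype G] [DecidableEq G]

def Lmat (F : Type*) [Field F] {G : Type*} [Group G] [Fintype G] [DecidableEq G] (g : G) :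
    Matrix G G F := Matrix.of fun u v => if v = g * u then 1 else 0

theorem Lmat_mul (g h : G) : (Lmat F g) * (Lmat F h) = Lmat F (h * g) := by
  ext u v
  rw [Matrix.mul_apply]
  simp only [Lmat, Matrix.of_apply, ite_mul, one_mul, zero_mul]
  rw [Finset.sum_ite_eq' Finset.univ (g * u) (fun w => if v = h * w then (1:F) else 0)]
  simp [mul_assoc]

theorem Lmat_one : Lmat F (1 : G) = 1 := by
  ext u v
  simp [Lmat, Matrix.one_apply, eq_comm]

theorem Lmat_pow (g : G) (j : ℕ) : (Lmat F g) ^ j = Lmat F (g ^ j) := by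
  induction j with
  | zero => rw [pow_zero, pow_zero, Lmat_one]
  | succ j ih => rw [pow_succ, ih, Lmat_mul, ← pow_succ']

theorem myKey [IsAlgClosed F] [CharZero F] (St : Finset G)
    (hconjS : ∀ s ∈ St, ∀ g : G, g⁻¹ * s * g ∈ St)
    (hpowS : ∀ k : ℕ, Nat.Coprime k (Fintype.card G) → ∀ s ∈ St, s ^ k ∈ St)
    {x : F} (hx : (∑ s ∈ St, Lmat F s).charpoly.IsRoot x) (σ : F →+* F) : σ x = x := by
  classical
  set A : Matrix G G F := ∑ s ∈ St, Lmat F s with hA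
  set m : ℕ := Fintype.card G with hmdef
  have hm : 0 < m := Fintype.card_pos
  haveI : NeZero m := ⟨hm.ne'⟩
  haveI : NeZero (m : F) := ⟨Nat.cast_ne_zero.mpr hm.ne'⟩
  -- the exponent k
  obtain ⟨ζ, hζ⟩ := HasEnoughRootsOfUnity.exists_primitiveRoot F m
  have hσζ : IsPrimitiveRoot (σ ζ) m := hζ.map_of_injective σ.injective
  obtain ⟨k0, hk0m, hk0⟩ := hζ.eq_pow_of_pow_eq_one hσζ.pow_eq_one
  have hcop0 : Nat.Coprime k0 m := (hζ.pow_iff_coprime hm k0).mp (hk0 ▸ hσζ)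
  obtain ⟨k, hkpos, hcop, hσk⟩ :
      ∃ k : ℕ, 0 < k ∧ Nat.Coprime k m ∧ ∀ ξ : F, ξ ^ m = 1 → σ ξ = ξ ^ k := by
    rcases Nat.eq_zero_or_pos k0 with h0 | h0
    · -- then m = 1
      have hm1 : m = 1 := by simpa [h0, Nat.coprime_zero_left] using hcop0
      exact ⟨1, one_pos, Nat.coprime_one_left m, fun ξ hξ => by
        rw [hm1, pow_one] at hξ
        rw [hξ, σ.map_one, one_pow]⟩
    · refine ⟨k0, h0, hcop0, fun ξ hξ => ?_⟩
      obtain ⟨i, _, rfl⟩ := hζ.eq_pow_of_pow_eq_one hξ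
      rw [map_pow, ← hk0, ← pow_mul, ← pow_mul, mul_comm]
  -- A commutes with each Lmat
  have hcomm : ∀ g : G, Commute (Lmat F g) A := by
    intro g
    have h1 : Lmat F g * A = ∑ s ∈ St, Lmat F (s * g) := by
      rw [hA, Finset.mul_sum]
      exact Finset.sum_congr rfl fun s _ => Lmat_mul g s
    have h2 : A * Lmat F g = ∑ s ∈ St, Lmat F (g * s) := by
      rw [hA, Finset.sum_mul]
      exact Finset.sum_congr rfl fun s _ => Lmat_mul s g
    rw [Commute, SemiconjBy, h1, h2]
    refine Finset.sum_nbij' (fun s => g⁻¹ * s * g) (fun s => g * s * g⁻¹) ?_ ?_ ?_ ?_ ?_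
    · intro s hs
      exact hconjS s hs g
    · intro s hs
      simpa [inv_inv] using hconjS s hs g⁻¹
    · intro s _; group
    · intro s _; group
    · intro s _
      congr 1
      group
  -- construct P
  set f : F[X] := A.charpoly with hf
  have hf0 : f ≠ 0 := A.charpoly_monic.ne_zero
  set e : ℕ := f.rootMultiplicity x with he
  have hepos : 0 < e := (Polynomial.rootMultiplicity_pos hf0).mpr hx
  set u : F[X] := f /ₘ (X - C x) ^ e with hu
  have hfu : (X - C x) ^ e * u = f := Polynomial.pow_mul_divByMonic_rootMultiplicity_eq f x
  have hux : u.eval x ≠ 0 := Polynomial.eval_divByMonic_pow_rootMultiplicity_ne_zero x hf0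
  have hcp1 : IsCoprime (X - C x) u := by
    obtain ⟨w, hw⟩ := Polynomial.X_sub_C_dvd_sub_C_eval (a := x) (p := u)
    refine ⟨-(C (u.eval x)⁻¹ * w), C (u.eval x)⁻¹, ?_⟩
    have hC : C (u.eval x)⁻¹ * C (u.eval x) = 1 := by
      rw [← Polynomial.C_mul, inv_mul_cancel₀ hux, Polynomial.C_1]
    calc -(C (u.eval x)⁻¹ * w) * (X - C x) + C (u.eval x)⁻¹ * u
        = C (u.eval x)⁻¹ * (u - (X - C x) * w) := by ring
      _ = 1 := by rw [← hw, sub_sub_cancel, hC]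
  have hcp : IsCoprime ((X - C x) ^ e) u := hcp1.pow_left
  obtain ⟨a, b, hab⟩ := hcp
  set P : Matrix G G F := Polynomial.aeval A (b * u) with hP
  have hCH : Polynomial.aeval A f = 0 := by
    rw [hf]; exact A.aeval_self_charpoly
  have hsplit : P + Polynomial.aeval A (a * (X - C x) ^ e) = 1 := by
    rw [hP, ← map_add]
    have : b * u + a * (X - C x) ^ e = 1 := by rw [← hab]; ring
    rw [this, _root_.map_one]
  have hP2 : P * P = P := by
    have h1 : P * Polynomial.aeval A (a * (X - C x) ^ e) = 0 := by
      rw [hP, ← _root_.map_mul]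
      have : b * u * (a * (X - C x) ^ e) = b * a * ((X - C x) ^ e * u) := by ring
      rw [this, hfu, _root_.map_mul, hCH, mul_zero]
    have h2 : P * (P + Polynomial.aeval A (a * (X - C x) ^ e)) = P * P := by
      rw [mul_add, h1, add_zero]
    rw [← h2, hsplit, mul_one]
  -- further structure
  have hAx : A - x • (1 : Matrix G G F) = Polynomial.aeval A (X - C x) := by
    rw [map_sub, Polynomial.aeval_X, Polynomial.aeval_C, Algebra.algebraMap_eq_smul_one]
  have haevalpow : (A - x • (1 : Matrix G G F)) ^ e * P = 0 := by
    rw [hAx, hP, ← map_pow, ← _root_.map_mul]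
    have h3 : (X - C x) ^ e * (b * u) = b * ((X - C x) ^ e * u) := by ring
    rw [h3, hfu, _root_.map_mul, hCH, mul_zero]
  have hcommAP : Commute (A - x • (1 : Matrix G G F)) P := by
    rw [hAx, hP]
    exact myCommuteAeval ((myCommuteAeval (Commute.refl A) (X - C x)).symm) (b * u)
  have hnil : ((A - x • (1 : Matrix G G F)) * P) ^ e = 0 := by
    rw [hcommAP.mul_pow, myIdemPow hP2 hepos, haevalpow]
  have htrNil : ((A - x • (1 : Matrix G G F)) * P).trace = 0 := myNilTrace hepos hnil
  have hAPsplit : A * P = x • P + (A - x • (1 : Matrix G G F)) * P := by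
    rw [sub_mul, smul_mul_assoc, one_mul]
    abel
  have htr1 : (A * P).trace = x * P.trace := by
    rw [hAPsplit, Matrix.trace_add, Matrix.trace_smul, htrNil, add_zero, smul_eq_mul]
  have htr2 : (A * P).trace = ∑ s ∈ St, ((Lmat F s) * P).trace := by
    rw [hA, Finset.sum_mul, Matrix.trace_sum]
  have hLP : ∀ s ∈ St, Commute (Lmat F s) P := fun s _ => myCommuteAeval (hcomm s) (b * u)
  have hQm : ∀ s ∈ St, ((Lmat F s) * P) ^ (m + 1) = (Lmat F s) * P := by
    intro s hs
    rw [(hLP s hs).mul_pow, Lmat_pow, pow_succ, hmdef, pow_card_eq_one, one_mul,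
      myIdemPow hP2 (Nat.succ_pos m)]
  have hstar : ∀ s ∈ St, σ (((Lmat F s) * P).trace) = ((Lmat F (s ^ k)) * P).trace := by
    intro s hs
    rw [myStar hm hkpos σ hσk (hQm s hs), (hLP s hs).mul_pow, Lmat_pow, myIdemPow hP2 hkpos]
  obtain ⟨r, hr, hrpos⟩ := myIdemTrace hP2
  have hP0 : P ≠ 0 := by
    intro h0
    rw [h0, zero_add] at hsplit
    have h5 : Polynomial.aeval A (a * (X - C x) ^ e)
        = Polynomial.aeval A a * (A - x • (1 : Matrix G G F)) ^ e := by
      rw [_root_.map_mul, map_pow, hAx]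
    have hdet1 : ((Polynomial.aeval A) (a * (X - C x) ^ e)).det = 1 := by
      rw [hsplit, Matrix.det_one]
    have hdet2 : ((Polynomial.aeval A) (a * (X - C x) ^ e)).det
        = (Polynomial.aeval A a).det * ((A - x • (1 : Matrix G G F)).det) ^ e := by
      rw [h5, Matrix.det_mul, Matrix.det_pow]
    rw [hdet2, myDetZero A hx, zero_pow hepos.ne', mul_zero] at hdet1
    exact zero_ne_one hdet1
  -- reindexing sum via s ↦ s ^ k
  set k' : ℕ := k ^ (Nat.totient m - 1) with hk'
  have hcop' : Nat.Coprime k' m := hcop.pow_left _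
  have hkk' : ∀ s : G, (s ^ k) ^ k' = s := by
    intro s
    have ht1 : 1 ≤ Nat.totient m := Nat.totient_pos.mpr hm
    have h1 : k * k' = k ^ Nat.totient m := by
      rw [hk', ← pow_succ']
      congr 1
      omega
    have h2 : k ^ Nat.totient m ≡ 1 [MOD m] := Nat.ModEq.pow_totient hcop
    have h3 : k * k' ≡ 1 [MOD orderOf s] :=
      (h1 ▸ h2).of_dvd (hmdef ▸ orderOf_dvd_card)
    calc (s ^ k) ^ k' = s ^ (k * k') := by rw [← pow_mul]
      _ = s ^ 1 := pow_eq_pow_iff_modEq.mpr h3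
      _ = s := pow_one s
  have hreindex : ∑ s ∈ St, ((Lmat F (s ^ k)) * P).trace
      = ∑ s ∈ St, ((Lmat F s) * P).trace := by
    refine Finset.sum_nbij' (fun s => s ^ k) (fun s => s ^ k') ?_ ?_ ?_ ?_ ?_
    · intro s hs; exact hpowS k hcop s hs
    · intro s hs; exact hpowS k' hcop' s hs
    · intro s _; exact hkk' s
    · intro s hs
      have ht1 : 1 ≤ Nat.totient m := Nat.totient_pos.mpr hm
      have h1 : k' * k = k ^ Nat.totient m := by
        rw [hk', mul_comm, ← pow_succ']
        congr 1
        omega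
      have h2 : k ^ Nat.totient m ≡ 1 [MOD m] := Nat.ModEq.pow_totient hcop
      have h3 : k' * k ≡ 1 [MOD orderOf s] :=
        (h1 ▸ h2).of_dvd (hmdef ▸ orderOf_dvd_card)
      calc (s ^ k') ^ k = s ^ (k' * k) := by rw [← pow_mul]
        _ = s ^ 1 := pow_eq_pow_iff_modEq.mpr h3
        _ = s := pow_one s
    · intro s _; rfl
  have htrn : P.trace ≠ 0 := by
    rw [hr]
    exact_mod_cast (hrpos hP0).ne'
  have hfinal : σ x * P.trace = x * P.trace := by
    calc σ x * P.trace = σ x * σ P.trace := by rw [hr, map_natCast]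
      _ = σ (x * P.trace) := (_root_.map_mul σ x P.trace).symm
      _ = σ ((A * P).trace) := by rw [htr1]
      _ = ∑ s ∈ St, σ (((Lmat F s) * P).trace) := by rw [htr2, map_sum]
      _ = ∑ s ∈ St, ((Lmat F (s ^ k)) * P).trace := Finset.sum_congr rfl hstar
      _ = ∑ s ∈ St, ((Lmat F s) * P).trace := hreindex
      _ = (A * P).trace := htr2.symm
      _ = x * P.trace := htr1
  exact mul_right_cancel₀ htrn hfinal

end Group
theorem myCycleTypePow {β : Type*} [Fintype β] [DecidableEq β] {k : ℕ}
    (σ : Equiv.Perm β) (hk : ∀ τ : Equiv.Perm β, Nat.Coprime k (orderOf τ)) :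
    (σ ^ k).cycleType = σ.cycleType := by
  induction σ using Equiv.Perm.cycle_induction_on with
  | base_one => rw [one_pow]
  | base_cycles c hc =>
      have hc' : Nat.Coprime k (orderOf c) := hk c
      have hck : (c ^ k).IsCycle := hc.pow_iff.mpr hc'
      rw [hck.cycleType, hc.cycleType, Equiv.Perm.support_pow_coprime hc']
  | induction_disjoint σ τ hd hcσ ihσ ihτ =>
      rw [hd.commute.mul_pow, (Equiv.Perm.Disjoint.cycleType_mul (hd.pow_disjoint_pow k k)), hd.cycleType_mul, ihσ, ihτ]

theorem myPowMem {n : ℕ} (S : Set (Equiv.Perm (Fin n)))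
    (hconj : ∀ s ∈ S, ∀ g : Equiv.Perm (Fin n), g⁻¹ * s * g ∈ S)
    {k : ℕ} (hk : Nat.Coprime k (Fintype.card (Equiv.Perm (Fin n))))
    {s : Equiv.Perm (Fin n)} (hs : s ∈ S) : s ^ k ∈ S := by
  have hco : ∀ τ : Equiv.Perm (Fin n), Nat.Coprime k (orderOf τ) := fun τ =>
    Nat.Coprime.coprime_dvd_right (orderOf_dvd_card) hk
  have hct : (s ^ k).cycleType = s.cycleType := myCycleTypePow s hco
  have hic : IsConj s (s ^ k) := Equiv.Perm.isConj_iff_cycleType_eq.mpr hct.symm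
  obtain ⟨c, hc⟩ := isConj_iff.mp hic
  have := hconj s hs c⁻¹
  rw [inv_inv] at this
  rw [← hc]
  convert this using 1
section Conj

local notation "F" => AlgebraicClosure ℚ

theorem myConjHom {q : Polynomial ℚ} (hq : Irreducible q) (hqm : q.Monic)
    {x y : F} (hx : Polynomial.aeval x q = 0) (hy : Polynomial.aeval y q = 0) :
    ∃ σ : F →+* F, σ x = y := by
  haveI : Algebra.IsAlgebraic ℚ F := AlgebraicClosure.isAlgebraic ℚ
  have hxi : IsIntegral ℚ x := (Algebra.IsAlgebraic.isAlgebraic x).isIntegral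
  have hyi : IsIntegral ℚ y := (Algebra.IsAlgebraic.isAlgebraic y).isIntegral
  have hqx : minpoly ℚ x = q := (minpoly.eq_of_irreducible_of_monic hq hx hqm).symm
  have hqy : minpoly ℚ y = q := (minpoly.eq_of_irreducible_of_monic hq hy hqm).symm
  have hxy : minpoly ℚ x = minpoly ℚ y := by rw [hqx, hqy]
  -- equivalence between the simple adjoins
  let e1 := IntermediateField.adjoinRootEquivAdjoin ℚ hxi
  let e2 := IntermediateField.adjoinRootEquivAdjoin ℚ hyi
  let e0 : AdjoinRoot (minpoly ℚ x) ≃ₐ[ℚ] AdjoinRoot (minpoly ℚ y) :=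
    AdjoinRoot.algEquivOfEq ℚ _ _ hxy
  let e : IntermediateField.adjoin ℚ {x} ≃ₐ[ℚ] IntermediateField.adjoin ℚ {y} :=
    (e1.symm.trans e0).trans e2
  have hegen : e (IntermediateField.AdjoinSimple.gen ℚ x)
      = IntermediateField.AdjoinSimple.gen ℚ y := by
    show e2 (e0 (e1.symm (IntermediateField.AdjoinSimple.gen ℚ x)))
      = IntermediateField.AdjoinSimple.gen ℚ y
    rw [IntermediateField.adjoinRootEquivAdjoin_symm_apply_gen]
    have h0 : e0 (AdjoinRoot.root (minpoly ℚ x)) = AdjoinRoot.root (minpoly ℚ y) :=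
      AdjoinRoot.algEquivOfEq_root _ _ hxy
    rw [h0, IntermediateField.adjoinRootEquivAdjoin_apply_root]
  -- both adjoins have F as algebraic closure
  haveI h1 : IsAlgClosure (IntermediateField.adjoin ℚ {x}) F :=
    ⟨inferInstance, Algebra.IsAlgebraic.tower_top (K := ℚ) _⟩
  haveI h2 : IsAlgClosure (IntermediateField.adjoin ℚ {y}) F :=
    ⟨inferInstance, Algebra.IsAlgebraic.tower_top (K := ℚ) _⟩
  refine ⟨(IsAlgClosure.equivOfEquiv F F e.toRingEquiv : F ≃+* F), ?_⟩
  have hgen : (algebraMap (IntermediateField.adjoin ℚ {x}) F)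
      (IntermediateField.AdjoinSimple.gen ℚ x) = x := rfl
  have hh := IsAlgClosure.equivOfEquiv_algebraMap F F e.toRingEquiv
    (IntermediateField.AdjoinSimple.gen ℚ x)
  rw [hgen] at hh
  show (IsAlgClosure.equivOfEquiv F F e.toRingEquiv) x = y
  rw [hh]
  show (algebraMap (IntermediateField.adjoin ℚ {y}) F) (e (IntermediateField.AdjoinSimple.gen ℚ x))
    = y
  rw [hegen]
  rfl

end Conj

end Helpers

theorem stmt_2 {n : ℕ} (hn : 1 ≤ n)
    (S : Set (Equiv.Perm (Fin n)))
    (hinv : ∀ s ∈ S, s⁻¹ ∈ S)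
    (hid : (1 : Equiv.Perm (Fin n)) ∉ S)
    (hconj : ∀ s ∈ S, ∀ g : Equiv.Perm (Fin n), g⁻¹ * s * g ∈ S)
    (Γ : SimpleGraph (Equiv.Perm (Fin n))) [DecidableRel Γ.Adj]
    (hΓ : ∀ u v : Equiv.Perm (Fin n), Γ.Adj u v ↔ v * u⁻¹ ∈ S) :
    ∀ μ ∈ spectrum ℝ (Γ.adjMatrix ℝ), ∃ m : ℤ, μ = m := by
  classical
  intro μ hμ
  -- μ is a root of the rational characteristic polynomial
  have hmapR : (Γ.adjMatrix ℚ).map (algebraMap ℚ ℝ) = Γ.adjMatrix ℝ := by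
    ext u v
    simp [SimpleGraph.adjMatrix_apply, apply_ite]
  have h1 : ¬ IsUnit ((algebraMap ℝ (Matrix _ _ ℝ)) μ - Γ.adjMatrix ℝ) := spectrum.mem_iff.mp hμ
  have h2 : ((algebraMap ℝ (Matrix _ _ ℝ)) μ - Γ.adjMatrix ℝ).det = 0 := by
    by_contra hd
    exact h1 ((Matrix.isUnit_iff_isUnit_det _).mpr (isUnit_iff_ne_zero.mpr hd))
  have hroot : (Γ.adjMatrix ℝ).charpoly.IsRoot μ := by
    rw [Polynomial.IsRoot, myEvalCharpoly]
    rwa [Algebra.algebraMap_eq_smul_one] at h2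
  have hcharR : (Γ.adjMatrix ℝ).charpoly = (Γ.adjMatrix ℚ).charpoly.map (algebraMap ℚ ℝ) := by
    rw [← hmapR, Matrix.charpoly_map]
  have haev : Polynomial.aeval μ (Γ.adjMatrix ℚ).charpoly = 0 := by
    rw [Polynomial.aeval_def, ← Polynomial.eval_map, ← hcharR]
    exact hroot
  have hint : IsIntegral ℚ μ := ⟨(Γ.adjMatrix ℚ).charpoly, (Γ.adjMatrix ℚ).charpoly_monic,
    by rwa [Polynomial.aeval_def] at haev⟩
  set q : Polynomial ℚ := minpoly ℚ μ with hqdef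
  have hq_irr : Irreducible q := minpoly.irreducible hint
  have hq_monic : q.Monic := minpoly.monic hint
  have hq_dvd : q ∣ (Γ.adjMatrix ℚ).charpoly := minpoly.dvd ℚ μ haev
  -- move to the algebraic closure of ℚ
  have hmapF : (Γ.adjMatrix ℚ).map (algebraMap ℚ (AlgebraicClosure ℚ))
      = Γ.adjMatrix (AlgebraicClosure ℚ) := by
    ext u v
    simp [SimpleGraph.adjMatrix_apply, apply_ite]
  have hcharF : (Γ.adjMatrix (AlgebraicClosure ℚ)).charpoly
      = (Γ.adjMatrix ℚ).charpoly.map (algebraMap ℚ (AlgebraicClosure ℚ)) := by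
    rw [← hmapF, Matrix.charpoly_map]
  have hAF : Γ.adjMatrix (AlgebraicClosure ℚ)
      = ∑ s ∈ S.toFinset, Lmat (AlgebraicClosure ℚ) s := by
    ext u v
    rw [Matrix.sum_apply]
    have hcond : ∀ s : Equiv.Perm (Fin n), (v = s * u) ↔ (s = v * u⁻¹) := by
      intro s
      constructor
      · intro h; rw [h]; group
      · intro h; rw [h]; group
    have hterm : ∀ s : Equiv.Perm (Fin n),
        (Lmat (AlgebraicClosure ℚ) s) u v
          = if s = v * u⁻¹ then (1 : AlgebraicClosure ℚ) else 0 := by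
      intro s
      simp only [Lmat, Matrix.of_apply]
      exact if_congr (hcond s) rfl rfl
    rw [Finset.sum_congr rfl fun s _ => hterm s,
      Finset.sum_ite_eq' S.toFinset (v * u⁻¹) (fun _ => (1 : AlgebraicClosure ℚ))]
    simp only [SimpleGraph.adjMatrix_apply, Set.mem_toFinset]
    exact if_congr (hΓ u v) rfl rfl
  -- every root of q in the algebraic closure is fixed by every ring endomorphism
  have hfix : ∀ z : AlgebraicClosure ℚ, Polynomial.aeval z q = 0 →
      ∀ σ : AlgebraicClosure ℚ →+* AlgebraicClosure ℚ, σ z = z := by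
    intro z hz σ
    have hdvd' : q.map (algebraMap ℚ (AlgebraicClosure ℚ))
        ∣ (Γ.adjMatrix ℚ).charpoly.map (algebraMap ℚ (AlgebraicClosure ℚ)) :=
      Polynomial.map_dvd _ hq_dvd
    obtain ⟨w, hw⟩ := hdvd'
    have hzq : (q.map (algebraMap ℚ (AlgebraicClosure ℚ))).eval z = 0 := by
      rw [Polynomial.eval_map, ← Polynomial.aeval_def]
      exact hz
    have hzroot : (Γ.adjMatrix (AlgebraicClosure ℚ)).charpoly.IsRoot z := by
      rw [hcharF, Polynomial.IsRoot, hw, Polynomial.eval_mul, hzq, zero_mul]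
    rw [hAF] at hzroot
    refine myKey S.toFinset ?_ ?_ hzroot σ
    · intro s hs g
      rw [Set.mem_toFinset] at *
      exact hconj s hs g
    · intro k hk s hs
      rw [Set.mem_toFinset] at *
      exact myPowMem S hconj hk hs
  -- q has degree 1
  have hq0 : q.map (algebraMap ℚ (AlgebraicClosure ℚ)) ≠ 0 :=
    Polynomial.map_ne_zero (minpoly.ne_zero hint)
  have hdegpos : 0 < q.natDegree := minpoly.natDegree_pos hint
  have hcard : (q.map (algebraMap ℚ (AlgebraicClosure ℚ))).roots.card = q.natDegree := by
    rw [← Polynomial.natDegree_map (algebraMap ℚ (AlgebraicClosure ℚ))]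
    exact (Polynomial.Splits.natDegree_eq_card_roots (IsAlgClosed.splits _)).symm
  have hz0 : ∃ z0, z0 ∈ (q.map (algebraMap ℚ (AlgebraicClosure ℚ))).roots := by
    apply Multiset.card_pos_iff_exists_mem.mp
    rw [hcard]; exact hdegpos
  obtain ⟨z0, hz0⟩ := hz0
  have haevroot : ∀ z ∈ (q.map (algebraMap ℚ (AlgebraicClosure ℚ))).roots,
      Polynomial.aeval z q = 0 := by
    intro z hz
    have := Polynomial.isRoot_of_mem_roots hz
    rwa [Polynomial.IsRoot, Polynomial.eval_map, ← Polynomial.aeval_def] at this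
  have hallz0 : ∀ z ∈ (q.map (algebraMap ℚ (AlgebraicClosure ℚ))).roots, z = z0 := by
    intro z hz
    obtain ⟨σ, hσ⟩ := myConjHom hq_irr hq_monic (haevroot z0 hz0) (haevroot z hz)
    rw [← hσ, hfix z0 (haevroot z0 hz0) σ]
  have hnodup : (q.map (algebraMap ℚ (AlgebraicClosure ℚ))).roots.Nodup :=
    Polynomial.nodup_roots (hq_irr.separable.map)
  have hdeg1 : q.natDegree = 1 := by
    have hsub : (q.map (algebraMap ℚ (AlgebraicClosure ℚ))).roots.toFinset ⊆ {z0} := by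
      intro z hz
      rw [Finset.mem_singleton]
      exact hallz0 z (Multiset.mem_toFinset.mp hz)
    have hle : (q.map (algebraMap ℚ (AlgebraicClosure ℚ))).roots.card ≤ 1 := by
      rw [← Multiset.toFinset_card_of_nodup hnodup]
      exact le_trans (Finset.card_le_card hsub) (by simp)
    omega
  -- μ is rational
  have hq1 : q = Polynomial.X + Polynomial.C (q.coeff 0) := hq_monic.eq_X_add_C hdeg1
  have hμval : μ = algebraMap ℚ ℝ (-(q.coeff 0)) := by
    have h3 := minpoly.aeval ℚ μ
    rw [← hqdef, hq1] at h3
    simp only [map_add, Polynomial.aeval_X, Polynomial.aeval_C] at h3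
    have := eq_neg_of_add_eq_zero_left h3
    rw [this, map_neg]
  -- μ is an algebraic integer
  have hmapZ : (Γ.adjMatrix ℤ).map (algebraMap ℤ ℝ) = Γ.adjMatrix ℝ := by
    ext u v
    simp [SimpleGraph.adjMatrix_apply, apply_ite]
  have hintZ : IsIntegral ℤ μ := by
    refine ⟨(Γ.adjMatrix ℤ).charpoly, (Γ.adjMatrix ℤ).charpoly_monic, ?_⟩
    have : ((Γ.adjMatrix ℤ).charpoly.map (algebraMap ℤ ℝ)).eval μ = 0 := by
      rw [← Matrix.charpoly_map, hmapZ]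
      exact hroot
    rwa [Polynomial.eval_map] at this
  have hcint : IsIntegral ℤ (-(q.coeff 0)) := by
    rw [hμval] at hintZ
    exact (isIntegral_algebraMap_iff (algebraMap ℚ ℝ).injective).mp hintZ
  obtain ⟨z, hz⟩ := IsIntegrallyClosed.isIntegral_iff.mp hcint
  refine ⟨z, ?_⟩
  rw [hμval, ← hz]
  push_cast
  rfl
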